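/- Let n ≥ 2 and let X ⊆ ℝ^n with the 1-norm metric be a finite set with |X| = k ≤ 2n. For any real coefficients α_x (x ∈ X) with ∑ α_x = 1, ∑_{x,y ∈ X} α_x α_y ‖x - y‖₁ ≤ min(k/4, n/2 - 1/4) · D(X). -/

import Mathlib

open MeasureTheory Set
open scoped ENNReal

section Helpers

/-- step function: indicator of `Iio r`. -/
noncomputable def stp (r : ℝ) : ℝ → ℝ := Set.indicator (Set.Iio r) (fun _ => (1:ℝ))

lemma stp_zero_or_one (r u : ℝ) : stp r u = 0 ∨ stp r u = 1 := by
  unfold stp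
  by_cases h : u ∈ Set.Iio r
  · right; simp [Set.indicator_of_mem h]
  · left; simp [Set.indicator_of_notMem h]

lemma stp_diff_sq (r s : ℝ) :
    (fun u => (stp r u - stp s u)^2)
      = Set.indicator (Set.Ico (min r s) (max r s)) (fun _ => (1:ℝ)) := by
  funext u
  unfold stp
  by_cases hr : u ∈ Set.Iio r <;> by_cases hs : u ∈ Set.Iio s <;>
    simp only [Set.mem_Iio, not_lt] at hr hs
  · have : u ∉ Set.Ico (min r s) (max r s) := by
      rintro ⟨h1, _⟩
      rcases min_le_iff.1 h1 with h | h <;> linarith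
    simp [Set.indicator_of_mem, Set.indicator_of_notMem, this, Set.mem_Iio, hr, hs]
  · have : u ∈ Set.Ico (min r s) (max r s) := by
      constructor
      · exact min_le_of_right_le hs
      · exact lt_max_of_lt_left hr
    simp [Set.indicator_apply, this, Set.mem_Iio, hr, not_lt.2 hs]
  · have : u ∈ Set.Ico (min r s) (max r s) := by
      constructor
      · exact min_le_of_left_le hr
      · exact lt_max_of_lt_right hs
    simp [Set.indicator_apply, this, Set.mem_Iio, hs, not_lt.2 hr]
  · have : u ∉ Set.Ico (min r s) (max r s) := by
      rintro ⟨_, h2⟩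
      rcases lt_max_iff.1 h2 with h | h <;> linarith
    simp [Set.indicator_apply, this, Set.mem_Iio, not_lt.2 hr, not_lt.2 hs]

lemma integrable_ind_Ico (a b : ℝ) :
    Integrable (Set.indicator (Set.Ico a b) (fun _ => (1:ℝ))) := by
  rw [integrable_indicator_iff measurableSet_Ico]
  refine integrableOn_const ?_
  rw [Real.volume_Ico]
  exact ENNReal.ofReal_ne_top

lemma integrable_stp_diff_sq (r s : ℝ) :
    Integrable (fun u => (stp r u - stp s u)^2) := by
  rw [stp_diff_sq]; exact integrable_ind_Ico _ _

lemma integral_stp_diff_sq (r s : ℝ) :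
    ∫ u, (stp r u - stp s u)^2 = |r - s| := by
  rw [stp_diff_sq]
  rw [integral_indicator_const (1:ℝ) measurableSet_Ico]
  rw [measureReal_def, Real.volume_Ico]
  rw [ENNReal.toReal_ofReal (by simp [min_le_max] : (0:ℝ) ≤ max r s - min r s)]
  rw [smul_eq_mul, mul_one, max_sub_min_eq_abs, abs_sub_comm]

lemma tele_abs (g : ℕ → ℝ) : ∀ (a b : ℕ), a ≤ b →
    |g b - g a| ≤ ∑ j ∈ Finset.Ico a b, |g (j+1) - g j| := by
  intro a b hab
  induction b, hab using Nat.le_induction with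
  | base => simp
  | succ b hab ih =>
    rw [Finset.sum_Ico_succ_top (by omega : a ≤ b)]
    calc |g (b+1) - g a| ≤ |g b - g a| + |g (b+1) - g b| := by
          have := abs_add_le (g b - g a) (g (b+1) - g b)
          simpa [show g b - g a + (g (b+1) - g b) = g (b+1) - g a by ring] using this
      _ ≤ (∑ j ∈ Finset.Ico a b, |g (j+1) - g j|) + |g (b+1) - g b| := by linarith

lemma cyc_lower (g : ℕ → ℝ) (m p q : ℕ) (hm : g m = g 0) (hp : p < m) (hq : q < m) :
    2 * |g p - g q| ≤ ∑ j ∈ Finset.range m, |g (j+1) - g j| := by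
  rcases le_total p q with hpq | hpq
  · rw [Finset.range_eq_Ico]
    rw [← Finset.sum_Ico_consecutive _ (Nat.zero_le p) (by omega : p ≤ m)]
    rw [← Finset.sum_Ico_consecutive _ hpq (by omega : q ≤ m)]
    have h1 : |g q - g p| ≤ ∑ j ∈ Finset.Ico p q, |g (j+1) - g j| := tele_abs g p q hpq
    have h2 : |g p - g 0| ≤ ∑ j ∈ Finset.Ico 0 p, |g (j+1) - g j| := tele_abs g 0 p (Nat.zero_le p)
    have h3 : |g m - g q| ≤ ∑ j ∈ Finset.Ico q m, |g (j+1) - g j| := tele_abs g q m (by omega)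
    rw [hm] at h3
    have h4 : |g p - g q| ≤ |g p - g 0| + |g 0 - g q| := abs_sub_le _ _ _
    have h7 : |g p - g q| = |g q - g p| := abs_sub_comm _ _
    linarith [abs_sub_comm (g 0) (g q)]
  · have hsym : |g p - g q| = |g q - g p| := abs_sub_comm _ _
    rw [hsym]
    rw [Finset.range_eq_Ico]
    rw [← Finset.sum_Ico_consecutive _ (Nat.zero_le q) (by omega : q ≤ m)]
    rw [← Finset.sum_Ico_consecutive _ hpq (by omega : p ≤ m)]
    have h1 : |g p - g q| ≤ ∑ j ∈ Finset.Ico q p, |g (j+1) - g j| := tele_abs g q p hpq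
    have h2 : |g q - g 0| ≤ ∑ j ∈ Finset.Ico 0 q, |g (j+1) - g j| := tele_abs g 0 q (Nat.zero_le q)
    have h3 : |g m - g p| ≤ ∑ j ∈ Finset.Ico p m, |g (j+1) - g j| := tele_abs g p m (by omega)
    rw [hm] at h3
    have h4 : |g q - g p| ≤ |g q - g 0| + |g 0 - g p| := abs_sub_le _ _ _
    have h7 : |g q - g p| = |g p - g q| := abs_sub_comm _ _
    linarith [abs_sub_comm (g 0) (g p)]

variable {ι : Type*} [DecidableEq ι]

lemma sum_quad_expand (X : Finset ι) (α : ι → ℝ) (c : ι → ℝ)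
    (hc : ∀ x, c x ^ 2 = c x) (hsum : ∑ x ∈ X, α x = 1) :
    ∑ x ∈ X, ∑ y ∈ X, α x * α y * (c x - c y)^2
      = 2 * (∑ x ∈ X, α x * c x) - 2 * (∑ x ∈ X, α x * c x)^2 := by
  set S := ∑ x ∈ X, α x * c x with hS
  have inner : ∀ x ∈ X, ∑ y ∈ X, α x * α y * (c x - c y)^2
      = α x * c x - 2 * (α x * c x) * S + α x * S := by
    intro x _
    have : ∀ y ∈ X, α x * α y * (c x - c y)^2
        = (α x * c x) * α y - 2 * (α x * c x) * (α y * c y) + α x * (α y * c y) := by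
      intro y _
      have h1 : (c x - c y)^2 = c x - 2 * (c x * c y) + c y := by
        nlinarith [hc x, hc y]
      rw [h1]; ring
    rw [Finset.sum_congr rfl this]
    rw [Finset.sum_add_distrib, Finset.sum_sub_distrib]
    rw [← Finset.mul_sum, ← Finset.mul_sum, ← Finset.mul_sum]
    rw [hsum, ← hS]
    ring
  rw [Finset.sum_congr rfl inner]
  rw [Finset.sum_add_distrib, Finset.sum_sub_distrib]
  rw [← Finset.sum_mul, ← Finset.sum_mul, ← hS]
  have h2 : ∑ i ∈ X, 2 * (α i * c i) = 2 * S := by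
    rw [← Finset.mul_sum, ← hS]
  rw [h2, hsum]
  ring

lemma pointwise_key (X : Finset ι) (α : ι → ℝ) (hsum : ∑ x ∈ X, α x = 1)
    (z : ι) (hz : z ∈ X) (hza : α z ≤ 0) (l : List ι)
    (hlf : l.toFinset = X.erase z) (c : ι → ℝ)
    (hc01 : ∀ x, c x = 0 ∨ c x = 1) :
    4 * (∑ x ∈ X, ∑ y ∈ X, α x * α y * (c x - c y)^2)
      ≤ ∑ j ∈ Finset.range l.length,
          (c (l.getD ((j+1) % l.length) z) - c (l.getD (j % l.length) z))^2 := by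
  have hcsq : ∀ x, c x ^ 2 = c x := by
    intro x; rcases hc01 x with h | h <;> simp [h]
  rw [sum_quad_expand X α c hcsq hsum]
  set m := l.length with hm
  set S := ∑ x ∈ X, α x * c x with hS
  set g : ℕ → ℝ := fun j => c (l.getD (j % m) z) with hg
  have hrhs : ∑ j ∈ Finset.range m, (c (l.getD ((j+1) % m) z) - c (l.getD (j % m) z))^2
      = ∑ j ∈ Finset.range m, (g (j+1) - g j)^2 := rfl
  rw [hrhs]
  have hg01 : ∀ j, g j = 0 ∨ g j = 1 := fun j => hc01 _
  have habs_sq : ∀ j, (g (j+1) - g j)^2 = |g (j+1) - g j| := by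
    intro j
    rcases hg01 (j+1) with h1 | h1 <;> rcases hg01 j with h2 | h2 <;>
      rw [h1, h2] <;> norm_num
  have hrhs_nonneg : (0:ℝ) ≤ ∑ j ∈ Finset.range m, (g (j+1) - g j)^2 :=
    Finset.sum_nonneg (fun j _ => sq_nonneg _)
  by_cases h1 : ∃ y ∈ X.erase z, c y = 1
  · by_cases h0 : ∃ w ∈ X.erase z, c w = 0
    · obtain ⟨y, hy, hy1⟩ := h1
      obtain ⟨w, hw, hw0⟩ := h0
      have hyl : y ∈ l := by rw [← List.mem_toFinset, hlf]; exact hy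
      have hwl : w ∈ l := by rw [← List.mem_toFinset, hlf]; exact hw
      obtain ⟨p, hpm, hpy⟩ := List.mem_iff_getElem.1 hyl
      obtain ⟨q, hqm, hqw⟩ := List.mem_iff_getElem.1 hwl
      have hgp : g p = 1 := by
        show c (l.getD (p % m) z) = 1
        rw [Nat.mod_eq_of_lt hpm, List.getD_eq_getElem _ _ hpm, hpy, hy1]
      have hgq : g q = 0 := by
        show c (l.getD (q % m) z) = 0
        rw [Nat.mod_eq_of_lt hqm, List.getD_eq_getElem _ _ hqm, hqw, hw0]
      have hgm : g m = g 0 := by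
        show c (l.getD (m % m) z) = c (l.getD (0 % m) z)
        rw [Nat.mod_self, Nat.zero_mod]
      have hub := cyc_lower g m p q hgm hpm hqm
      have h2 : |g p - g q| = 1 := by rw [hgp, hgq]; norm_num
      rw [h2] at hub
      have hSb : 4 * (2*S - 2*S^2) ≤ 2 := by nlinarith [sq_nonneg (2*S - 1)]
      calc 4 * (2*S - 2*S^2) ≤ 2 := hSb
        _ ≤ ∑ j ∈ Finset.range m, |g (j+1) - g j| := by linarith
        _ = ∑ j ∈ Finset.range m, (g (j+1) - g j)^2 :=
            Finset.sum_congr rfl (fun j _ => (habs_sq j).symm)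
    · push_neg at h0
      have hall : ∀ y ∈ X.erase z, c y = 1 := by
        intro y hy; rcases hc01 y with h | h
        · exact absurd h (h0 y hy)
        · exact h
      have hsplit : S = α z * c z + ∑ y ∈ X.erase z, α y * c y :=
        (Finset.add_sum_erase X (fun x => α x * c x) hz).symm
      have herase : ∑ y ∈ X.erase z, α y * c y = 1 - α z := by
        rw [Finset.sum_congr rfl (fun y hy => by rw [hall y hy, mul_one])]
        rw [Finset.sum_erase_eq_sub hz, hsum]
      have hcz1 : c z ≤ 1 := by rcases hc01 z with h | h <;> simp [h]
      have hzge : α z ≤ α z * c z := by nlinarith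
      have hSge : 1 ≤ S := by rw [hsplit, herase]; linarith
      have : 2*S - 2*S^2 ≤ 0 := by nlinarith
      linarith
  · push_neg at h1
    have hall : ∀ y ∈ X.erase z, c y = 0 := by
      intro y hy; rcases hc01 y with h | h
      · exact h
      · exact absurd h (h1 y hy)
    have hsplit : S = α z * c z + ∑ y ∈ X.erase z, α y * c y :=
      (Finset.add_sum_erase X (fun x => α x * c x) hz).symm
    have herase : ∑ y ∈ X.erase z, α y * c y = 0 :=
      Finset.sum_eq_zero (fun y hy => by rw [hall y hy, mul_zero])
    have hcz0 : 0 ≤ c z := by rcases hc01 z with h | h <;> simp [h]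
    have hSle : S ≤ 0 := by
      rw [hsplit, herase, add_zero]
      exact mul_nonpos_of_nonpos_of_nonneg hza hcz0
    have : 2*S - 2*S^2 ≤ 0 := by nlinarith
    linarith

lemma onedim (X : Finset ι) (α : ι → ℝ) (hsum : ∑ x ∈ X, α x = 1)
    (z : ι) (hz : z ∈ X) (hza : α z ≤ 0) (l : List ι)
    (hlf : l.toFinset = X.erase z) (t : ι → ℝ) :
    4 * (∑ x ∈ X, ∑ y ∈ X, α x * α y * |t x - t y|)
      ≤ ∑ j ∈ Finset.range l.length,
          |t (l.getD ((j+1) % l.length) z) - t (l.getD (j % l.length) z)| := by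
  set m := l.length with hm
  set F : ℝ → ℝ := fun u => ∑ x ∈ X, ∑ y ∈ X, α x * α y * (stp (t x) u - stp (t y) u)^2
    with hF
  set G : ℝ → ℝ := fun u => ∑ j ∈ Finset.range m,
      (stp (t (l.getD ((j+1) % m) z)) u - stp (t (l.getD (j % m) z)) u)^2 with hG
  have hFint : Integrable F := by
    apply integrable_finset_sum
    intro x _
    apply integrable_finset_sum
    intro y _
    exact (integrable_stp_diff_sq (t x) (t y)).const_mul _
  have hGint : Integrable G := by
    apply integrable_finset_sum
    intro j _
    exact integrable_stp_diff_sq _ _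
  have hLHS : ∑ x ∈ X, ∑ y ∈ X, α x * α y * |t x - t y| = ∫ u, F u := by
    rw [integral_finset_sum X (fun x _ => by
      exact integrable_finset_sum X (fun y _ =>
        (integrable_stp_diff_sq (t x) (t y)).const_mul _))]
    refine Finset.sum_congr rfl (fun x _ => ?_)
    rw [integral_finset_sum X (fun y _ => (integrable_stp_diff_sq (t x) (t y)).const_mul _)]
    refine Finset.sum_congr rfl (fun y _ => ?_)
    rw [integral_const_mul, integral_stp_diff_sq]
  have hRHS : ∑ j ∈ Finset.range m,
      |t (l.getD ((j+1) % m) z) - t (l.getD (j % m) z)| = ∫ u, G u := by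
    rw [integral_finset_sum (Finset.range m) (fun j _ => integrable_stp_diff_sq _ _)]
    exact Finset.sum_congr rfl (fun j _ => (integral_stp_diff_sq _ _).symm)
  rw [hLHS, hRHS]
  rw [← integral_const_mul]
  apply integral_mono (hFint.const_mul 4) hGint
  intro u
  have := pointwise_key X α hsum z hz hza l hlf (fun x => stp (t x) u)
    (fun x => stp_zero_or_one (t x) u)
  exact this

end Helpers

theorem stmt_8 (n : ℕ) (hn : 2 ≤ n) (X : Finset (PiLp 1 fun _ : Fin n => ℝ))
    (hcard : X.card ≤ 2 * n)
    (α : (PiLp 1 fun _ : Fin n => ℝ) → ℝ)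
    (hsum : ∑ x ∈ X, α x = 1) :
    ∑ x ∈ X, ∑ y ∈ X, α x * α y * ‖x - y‖ ≤
      min ((X.card : ℝ) / 4) ((n : ℝ) / 2 - 1 / 4) *
        Metric.diam (X : Set (PiLp 1 fun _ : Fin n => ℝ)) := by
  classical
  set D := Metric.diam (X : Set (PiLp 1 fun _ : Fin n => ℝ)) with hD
  have hD0 : 0 ≤ D := Metric.diam_nonneg
  have hXne : X.Nonempty := by
    rcases Finset.eq_empty_or_nonempty X with h | h
    · rw [h] at hsum; simp at hsum
    · exact h
  have hk1 : 1 ≤ X.card := Finset.card_pos.2 hXne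
  have hk1' : (1:ℝ) ≤ (X.card:ℝ) := by exact_mod_cast hk1
  have hk2n' : (X.card:ℝ) ≤ 2*(n:ℝ) := by exact_mod_cast hcard
  have hn' : (2:ℝ) ≤ (n:ℝ) := by exact_mod_cast hn
  have hnorm : ∀ x y : PiLp 1 fun _ : Fin n => ℝ, ‖x - y‖ = ∑ i, |x i - y i| := by
    intro x y
    have hp : (0:ℝ) < (1:ℝ≥0∞).toReal := by norm_num
    have h := PiLp.norm_eq_sum hp (x - y)
    simp only [ENNReal.toReal_one, Real.rpow_one, div_one] at h
    rw [h]
    exact Finset.sum_congr rfl (fun i _ => by simp [Real.norm_eq_abs])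
  have hdle : ∀ x ∈ X, ∀ y ∈ X, ‖x - y‖ ≤ D := by
    intro x hx y hy
    rw [← dist_eq_norm]
    exact Metric.dist_le_diam_of_mem (Set.Finite.isBounded (X.finite_toSet)) hx hy
  by_cases hpos : ∀ x ∈ X, 0 < α x
  · -- Case I : all weights positive
    set A := ∑ x ∈ X, (α x)^2 with hA
    have hbound : ∑ x ∈ X, ∑ y ∈ X, α x * α y * ‖x - y‖ ≤ (1 - A) * D := by
      have hstep : ∀ x ∈ X, ∑ y ∈ X, α x * α y * ‖x - y‖
          ≤ (∑ y ∈ X, α x * α y * D) - (α x)^2 * D := by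
        intro x hx
        have e1 : α x * α x * ‖x - x‖ + ∑ y ∈ X.erase x, α x * α y * ‖x - y‖
            = ∑ y ∈ X, α x * α y * ‖x - y‖ :=
          Finset.add_sum_erase X (fun y => α x * α y * ‖x - y‖) hx
        have e2 : α x * α x * D + ∑ y ∈ X.erase x, α x * α y * D
            = ∑ y ∈ X, α x * α y * D :=
          Finset.add_sum_erase X (fun y => α x * α y * D) hx
        have h0 : α x * α x * ‖x - x‖ = 0 := by simp
        have hle : ∑ y ∈ X.erase x, α x * α y * ‖x - y‖
            ≤ ∑ y ∈ X.erase x, α x * α y * D := by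
          apply Finset.sum_le_sum
          intro y hy
          have hxp := hpos x hx
          have hyp := hpos y (Finset.mem_of_mem_erase hy)
          have hxyd := hdle x hx y (Finset.mem_of_mem_erase hy)
          have hxyp : 0 ≤ α x * α y := by positivity
          exact mul_le_mul_of_nonneg_left hxyd hxyp
        have hsq : (α x)^2 * D = α x * α x * D := by ring
        linarith
      have e3 : ∑ x ∈ X, ∑ y ∈ X, α x * α y * D = D := by
        have hinner : ∀ x ∈ X, ∑ y ∈ X, α x * α y * D = α x * D := by
          intro x _
          have : ∑ y ∈ X, α x * α y * D = (α x * D) * ∑ y ∈ X, α y := by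
            rw [Finset.mul_sum]
            exact Finset.sum_congr rfl (fun y _ => by ring)
          rw [this, hsum, mul_one]
        rw [Finset.sum_congr rfl hinner, ← Finset.sum_mul, hsum, one_mul]
      have e4 : ∑ x ∈ X, (α x)^2 * D = A * D := by rw [← Finset.sum_mul]
      calc ∑ x ∈ X, ∑ y ∈ X, α x * α y * ‖x - y‖
          ≤ ∑ x ∈ X, ((∑ y ∈ X, α x * α y * D) - (α x)^2 * D) :=
            Finset.sum_le_sum hstep
        _ = (∑ x ∈ X, ∑ y ∈ X, α x * α y * D) - ∑ x ∈ X, (α x)^2 * D :=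
            Finset.sum_sub_distrib _ _
        _ = (1 - A) * D := by rw [e3, e4]; ring
    have hCS : (1:ℝ) ≤ (X.card:ℝ) * A := by
      have h := sq_sum_le_card_mul_sum_sq (s := X) (f := α)
      rw [hsum] at h
      simpa using h
    have hA0 : 0 ≤ A := Finset.sum_nonneg (fun x _ => sq_nonneg _)
    have hminb : 1 - A ≤ min ((X.card:ℝ)/4) ((n:ℝ)/2 - 1/4) := by
      refine le_min ?_ ?_
      · nlinarith [sq_nonneg ((X.card:ℝ) - 2)]
      · have h2nA : 1 ≤ 2*(n:ℝ)*A := by nlinarith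
        nlinarith [sq_nonneg ((n:ℝ) - 2)]
    calc ∑ x ∈ X, ∑ y ∈ X, α x * α y * ‖x - y‖ ≤ (1 - A) * D := hbound
      _ ≤ min ((X.card:ℝ)/4) ((n:ℝ)/2 - 1/4) * D :=
          mul_le_mul_of_nonneg_right hminb hD0
  · -- Case II : some weight nonpositive
    push_neg at hpos
    obtain ⟨z, hz, hza'⟩ := hpos
    have hza : α z ≤ 0 := hza'
    set l := (X.erase z).toList with hl
    have hlf : l.toFinset = X.erase z := Finset.toList_toFinset _
    set m := l.length with hm
    have hmcard : m = X.card - 1 := by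
      rw [hm, hl, Finset.length_toList, Finset.card_erase_of_mem hz]
    have hm0 : m ≠ 0 := by
      intro h
      have hnil : l = [] := List.length_eq_zero_iff.1 h
      have hempty : X.erase z = ∅ := by rw [← hlf, hnil]; rfl
      have hXz : X = {z} := by
        apply Finset.eq_singleton_iff_unique_mem.2
        refine ⟨hz, fun x hx => ?_⟩
        by_contra hne
        have : x ∈ X.erase z := Finset.mem_erase.2 ⟨hne, hx⟩
        rw [hempty] at this
        exact absurd this (Finset.notMem_empty x)
      rw [hXz] at hsum
      simp at hsum
      linarith
    have hmpos : 0 < m := Nat.pos_of_ne_zero hm0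
    have hPX : ∀ j : ℕ, l.getD (j % m) z ∈ X := by
      intro j
      have hlt : j % m < m := Nat.mod_lt _ hmpos
      rw [List.getD_eq_getElem _ _ hlt]
      have h1 : l[j % m] ∈ l := List.getElem_mem _
      have h2 : l[j % m] ∈ X.erase z := by rw [← hlf]; exact List.mem_toFinset.2 h1
      exact Finset.mem_of_mem_erase h2
    have hexp : ∑ x ∈ X, ∑ y ∈ X, α x * α y * ‖x - y‖
        = ∑ i : Fin n, ∑ x ∈ X, ∑ y ∈ X, α x * α y * |x i - y i| := by
      have h1 : ∑ x ∈ X, ∑ y ∈ X, α x * α y * ‖x - y‖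
          = ∑ x ∈ X, ∑ y ∈ X, ∑ i : Fin n, α x * α y * |x i - y i| := by
        refine Finset.sum_congr rfl (fun x _ => Finset.sum_congr rfl (fun y _ => ?_))
        rw [hnorm x y, Finset.mul_sum]
      rw [h1]
      have h2 : ∀ x ∈ X, ∑ y ∈ X, ∑ i : Fin n, α x * α y * |x i - y i|
          = ∑ i : Fin n, ∑ y ∈ X, α x * α y * |x i - y i| :=
        fun x _ => Finset.sum_comm
      rw [Finset.sum_congr rfl h2]
      exact Finset.sum_comm
    have hle4 : 4 * (∑ x ∈ X, ∑ y ∈ X, α x * α y * ‖x - y‖) ≤ (m:ℝ) * D := by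
      rw [hexp, Finset.mul_sum]
      calc ∑ i : Fin n, 4 * (∑ x ∈ X, ∑ y ∈ X, α x * α y * |x i - y i|)
          ≤ ∑ i : Fin n, ∑ j ∈ Finset.range m,
              |(l.getD ((j+1) % m) z) i - (l.getD (j % m) z) i| := by
            refine Finset.sum_le_sum (fun i _ => ?_)
            exact onedim X α hsum z hz hza l hlf (fun x => x i)
        _ = ∑ j ∈ Finset.range m, ∑ i : Fin n,
              |(l.getD ((j+1) % m) z) i - (l.getD (j % m) z) i| := Finset.sum_comm
        _ = ∑ j ∈ Finset.range m, ‖(l.getD ((j+1) % m) z) - (l.getD (j % m) z)‖ := by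
            exact Finset.sum_congr rfl (fun j _ => (hnorm _ _).symm)
        _ ≤ ∑ j ∈ Finset.range m, D :=
            Finset.sum_le_sum (fun j _ => hdle _ (hPX (j+1)) _ (hPX j))
        _ = (m:ℝ) * D := by
            rw [Finset.sum_const, Finset.card_range, nsmul_eq_mul]
    have hmR : (m:ℝ) = (X.card:ℝ) - 1 := by
      rw [hmcard, Nat.cast_sub hk1, Nat.cast_one]
    have hminb2 : ((X.card:ℝ) - 1)/4 ≤ min ((X.card:ℝ)/4) ((n:ℝ)/2 - 1/4) := by
      refine le_min (by linarith) (by linarith)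
    calc ∑ x ∈ X, ∑ y ∈ X, α x * α y * ‖x - y‖
        ≤ ((X.card:ℝ) - 1)/4 * D := by rw [← hmR]; linarith
      _ ≤ min ((X.card:ℝ)/4) ((n:ℝ)/2 - 1/4) * D :=
          mul_le_mul_of_nonneg_right hminb2 hD0
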